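/- Assume H = G^θ. Let X be a subset of the coset space G/H containing the origin o = eH. Then X is antipodal if and only if: for every coset gH ∈ X one has φ(g) ∈ H and φ(g)² = e, and for all cosets g₁H, g₂H ∈ X the elements φ(g₁) and φ(g₂) commute in G. -/
import Mathlib


/-- `X ⊆ G ⧸ H` is antipodal if `φ(g₂⁻¹g₁) ∈ H` for all cosets `g₁H, g₂H ∈ X`,
where `φ(g) = g·θ(g)⁻¹` is the Cartan quadratic map. -/
def IsAntipodal {G : Type*} [Group G] (θ : G → G) (H : Subgroup G) (X : Set (G ⧸ H)) : Prop :=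
  ∀ g₁ g₂ : G, (QuotientGroup.mk g₁ : G ⧸ H) ∈ X → (QuotientGroup.mk g₂ : G ⧸ H) ∈ X →
    (g₂⁻¹ * g₁) * (θ (g₂⁻¹ * g₁))⁻¹ ∈ H

/-- `X` is a maximal antipodal set if it is antipodal and not properly contained in
any other antipodal subset of `G ⧸ H`. -/
def MaximalAntipodal {G : Type*} [Group G] (θ : G → G) (H : Subgroup G) (X : Set (G ⧸ H)) : Prop :=
  IsAntipodal θ H X ∧ ∀ Y : Set (G ⧸ H), IsAntipodal θ H Y → X ⊆ Y → Y = X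

lemma aux_iff {G : Type*} [Group G] (g₁ g₂ u v : G)
    (ha : (g₁ * u⁻¹) * (g₁ * u⁻¹) = 1) (hb : (g₂ * v⁻¹) * (g₂ * v⁻¹) = 1) :
    v⁻¹ * u * g₁⁻¹ * g₂ = g₂⁻¹ * g₁ * u⁻¹ * v ↔
      Commute (g₁ * u⁻¹) (g₂ * v⁻¹) := by
  set a := g₁ * u⁻¹ with ha_def
  set b := g₂ * v⁻¹ with hb_def
  have ha' : a⁻¹ = a := inv_eq_of_mul_eq_one_right ha
  have hb' : b⁻¹ = b := inv_eq_of_mul_eq_one_right hb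
  have hu' : u = a⁻¹ * g₁ := by rw [ha_def]; group
  have hv' : v = b⁻¹ * g₂ := by rw [hb_def]; group
  constructor
  · intro h
    have h2 : b * a⁻¹ = a * b⁻¹ := by
      calc b * a⁻¹ = g₂ * (v⁻¹ * u * g₁⁻¹ * g₂) * g₂⁻¹ := by rw [hu', hv']; group
        _ = g₂ * (g₂⁻¹ * g₁ * u⁻¹ * v) * g₂⁻¹ := by rw [h]
        _ = a * b⁻¹ := by rw [hu', hv']; group
    rw [ha', hb'] at h2
    exact h2.symm
  · intro hc
    have h2 : a * b⁻¹ = b * a⁻¹ := by rw [ha', hb']; exact hc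
    calc v⁻¹ * u * g₁⁻¹ * g₂ = g₂⁻¹ * (b * a⁻¹) * g₂ := by rw [hu', hv']; group
      _ = g₂⁻¹ * (a * b⁻¹) * g₂ := by rw [h2]
      _ = g₂⁻¹ * g₁ * u⁻¹ * v := by rw [hu', hv']; group


/-- assuming `H = G^θ`, a subset `X ⊆ G/H` containing the origin is antipodal
iff `φ(g) ∈ H` and `φ(g)² = 1` for every coset `gH ∈ X`, and `φ(g₁)`, `φ(g₂)` commute for all
cosets `g₁H, g₂H ∈ X`, where `φ(g) = g·θ(g)⁻¹`. -/
theorem stmt_0 {G : Type*} [Group G] (θ : G →* G) (hθ : ∀ g, θ (θ g) = g)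
    (H : Subgroup G) (hH : ∀ g, g ∈ H ↔ θ g = g)
    (X : Set (G ⧸ H)) (hX : (QuotientGroup.mk (1 : G) : G ⧸ H) ∈ X) :
    IsAntipodal (⇑θ) H X ↔
      ((∀ g : G, (QuotientGroup.mk g : G ⧸ H) ∈ X →
          g * (θ g)⁻¹ ∈ H ∧ (g * (θ g)⁻¹) ^ 2 = 1) ∧
        ∀ g₁ g₂ : G, (QuotientGroup.mk g₁ : G ⧸ H) ∈ X → (QuotientGroup.mk g₂ : G ⧸ H) ∈ X →
          Commute (g₁ * (θ g₁)⁻¹) (g₂ * (θ g₂)⁻¹)) := by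
  have hθE : ∀ g₁ g₂ : G, θ ((g₂⁻¹ * g₁) * (θ (g₂⁻¹ * g₁))⁻¹) =
      (θ g₂)⁻¹ * θ g₁ * g₁⁻¹ * g₂ := by
    intro g₁ g₂
    simp only [map_mul, map_inv, hθ]
    group
  have hE : ∀ g₁ g₂ : G, (g₂⁻¹ * g₁) * (θ (g₂⁻¹ * g₁))⁻¹ =
      g₂⁻¹ * g₁ * (θ g₁)⁻¹ * θ g₂ := by
    intro g₁ g₂
    simp only [map_mul, map_inv]
    group
  constructor
  · intro hA
    have key : ∀ g : G, (QuotientGroup.mk g : G ⧸ H) ∈ X →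
        g * (θ g)⁻¹ ∈ H ∧ (g * (θ g)⁻¹) ^ 2 = 1 := by
      intro g hg
      have h1 := hA g 1 hg hX
      simp only [inv_one, one_mul] at h1
      refine ⟨h1, ?_⟩
      have h2 := (hH _).mp h1
      simp only [map_mul, map_inv, hθ] at h2
      have h3 : (g * (θ g)⁻¹) * (θ g * g⁻¹) = 1 := by group
      rw [sq]
      nth_rewrite 2 [← h2]
      exact h3
    refine ⟨key, fun g₁ g₂ hg₁ hg₂ => ?_⟩
    have m := hA g₁ g₂ hg₁ hg₂
    have hfix := (hH _).mp m
    rw [hθE, hE] at hfix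
    have sq1 := (key g₁ hg₁).2
    have sq2 := (key g₂ hg₂).2
    rw [sq] at sq1 sq2
    exact (aux_iff g₁ g₂ (θ g₁) (θ g₂) sq1 sq2).mp (by
      calc (θ g₂)⁻¹ * θ g₁ * g₁⁻¹ * g₂ = g₂⁻¹ * g₁ * (θ g₁)⁻¹ * θ g₂ := hfix
      )
  · rintro ⟨key, hcomm⟩ g₁ g₂ hg₁ hg₂
    rw [hH]
    have sq1 := (key g₁ hg₁).2
    have sq2 := (key g₂ hg₂).2
    rw [sq] at sq1 sq2
    rw [hθE, hE]
    exact (aux_iff g₁ g₂ (θ g₁) (θ g₂) sq1 sq2).mpr (hcomm g₁ g₂ hg₁ hg₂)
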